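/- The maximum size of an independent set in the circulant graph C_17(1,3) is 7. -/

import Mathlib

/-- The circulant graph `C_n(1,3)`: vertices are `ZMod n`, and `i` is adjacent to `j`
iff `i - j ≡ ±1` or `±3 (mod n)`. -/
def circulantGraph (n : ℕ) : SimpleGraph (ZMod n) :=
  SimpleGraph.fromRel (fun i j => j - i = 1 ∨ j - i = 3)

/-- `vc` (on vertices) and `ec` (on edges) form a total `k`-colouring of `G`:
adjacent vertices get distinct colours, adjacent (distinct, incident) edges get distinct
colours, and each vertex gets a colour distinct from those of its incident edges. -/
def IsTotalColoring {V : Type*} (G : SimpleGraph V) (k : ℕ)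
    (vc : V → Fin k) (ec : Sym2 V → Fin k) : Prop :=
  (∀ v w : V, G.Adj v w → vc v ≠ vc w) ∧
  (∀ e₁ ∈ G.edgeSet, ∀ e₂ ∈ G.edgeSet, e₁ ≠ e₂ → (∃ v, v ∈ e₁ ∧ v ∈ e₂) → ec e₁ ≠ ec e₂) ∧
  (∀ v : V, ∀ e ∈ G.edgeSet, v ∈ e → vc v ≠ ec e)

/-- `G` has a total `k`-colouring. -/
def HasTotalColoring {V : Type*} (G : SimpleGraph V) (k : ℕ) : Prop :=
  ∃ vc ec, IsTotalColoring G k vc ec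

/-- The total chromatic number of `G`: the least `k` admitting a total `k`-colouring. -/
noncomputable def totalChromaticNumber {V : Type*} (G : SimpleGraph V) : ℕ :=
  sInf {k : ℕ | HasTotalColoring G k}

instance : DecidableRel (circulantGraph 17).Adj := fun a b =>
  decidable_of_iff (a ≠ b ∧ ((b - a = 1 ∨ b - a = 3) ∨ (a - b = 1 ∨ a - b = 3))) (by
    rw [circulantGraph, SimpleGraph.fromRel_adj])

lemma circ17_adj_iff (a b : ZMod 17) : (circulantGraph 17).Adj a b ↔
    a ≠ b ∧ ((b - a = 1 ∨ b - a = 3) ∨ (a - b = 1 ∨ a - b = 3)) := by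
  rw [circulantGraph, SimpleGraph.fromRel_adj]

lemma circ17_adj_one (a : ZMod 17) : (circulantGraph 17).Adj a (a + 1) := by
  rw [circ17_adj_iff]
  refine ⟨?_, Or.inl (Or.inl (by ring))⟩
  intro h
  have : (1 : ZMod 17) = 0 := by
    have := congrArg (· - a) h
    simpa using this.symm
  exact absurd this (by decide)

lemma circ17_adj_three (a : ZMod 17) : (circulantGraph 17).Adj a (a + 3) := by
  rw [circ17_adj_iff]
  refine ⟨?_, Or.inl (Or.inr (by ring))⟩
  intro h
  have : (3 : ZMod 17) = 0 := by
    have := congrArg (· - a) h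
    simpa using this.symm
  exact absurd this (by decide)

lemma circ17_upper_bound (s : Finset (ZMod 17))
    (hs : ∀ v ∈ s, ∀ w ∈ s, ¬ (circulantGraph 17).Adj v w) : s.card ≤ 7 := by
  by_contra hbig
  push_neg at hbig
  -- t = s + 1
  set t : Finset (ZMod 17) := s.image (· + 1) with ht
  have hinj : Function.Injective (· + 1 : ZMod 17 → ZMod 17) := add_left_injective 1
  have htcard : t.card = s.card := Finset.card_image_of_injective _ hinj
  have hdisj : Disjoint s t := by
    rw [Finset.disjoint_left]
    intro a ha hat
    obtain ⟨b, hb, rfl⟩ := Finset.mem_image.mp hat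
    exact hs b hb (b + 1) ha (circ17_adj_one b)
  have hucard : (s ∪ t).card = 2 * s.card := by
    rw [Finset.card_union_of_disjoint hdisj, htcard]; ring
  have hle : (s ∪ t).card ≤ 17 := by
    have := Finset.card_le_univ (s ∪ t)
    simpa using this
  have hcard8 : s.card = 8 := by omega
  have hc16 : (s ∪ t).card = 16 := by omega
  have hcompl : (s ∪ t)ᶜ.card = 1 := by
    rw [Finset.card_compl, hc16]
    simp
  obtain ⟨x, hx⟩ := Finset.card_eq_one.mp hcompl
  have hxmem : ∀ y : ZMod 17, y ∉ s → y ∉ t → y = x := by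
    intro y h1 h2
    have : y ∈ (s ∪ t)ᶜ := by
      rw [Finset.mem_compl, Finset.mem_union]
      tauto
    rw [hx, Finset.mem_singleton] at this
    exact this
  have hnott : ∀ a ∈ s, a + 2 ∉ t := by
    intro a ha hmem
    obtain ⟨b, hb, hbe⟩ := Finset.mem_image.mp hmem
    have : b = a + 1 := by
      have := congrArg (· - 1) hbe
      simp at this
      rw [this]; ring
    subst this
    exact hs a ha (a + 1) hb (circ17_adj_one a)
  have hstep : ∀ a ∈ s, a + 2 ∈ s := by
    intro a ha
    by_contra h2
    have hx2 : a + 2 = x := hxmem _ h2 (hnott a ha)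
    -- now a + 3
    have h3s : a + 3 ∉ s := fun h => hs a ha (a + 3) h (circ17_adj_three a)
    have h3t : a + 3 ∉ t := by
      intro hmem
      obtain ⟨b, hb, hbe⟩ := Finset.mem_image.mp hmem
      have : b = a + 2 := by
        have := congrArg (· - 1) hbe
        simp at this
        rw [this]; ring
      subst this
      exact h2 hb
    have hx3 : a + 3 = x := hxmem _ h3s h3t
    have : (1 : ZMod 17) = 0 := by
      have h := hx3.trans hx2.symm
      have := congrArg (· - (a + 2)) h
      simpa [show (3 : ZMod 17) - 2 = 1 by decide] using this
    exact absurd this (by decide)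
  -- s nonempty
  obtain ⟨a, ha⟩ := Finset.card_pos.mp (by omega : 0 < s.card)
  have hiter : ∀ n : ℕ, a + 2 * (n : ZMod 17) ∈ s := by
    intro n
    induction n with
    | zero => simpa using ha
    | succ n ih =>
      have := hstep _ ih
      have heq : a + 2 * ((n + 1 : ℕ) : ZMod 17) = a + 2 * (n : ZMod 17) + 2 := by
        push_cast; ring
      rwa [heq]
  have huniv : s = Finset.univ := by
    rw [Finset.eq_univ_iff_forall]
    intro y
    have := hiter ((y - a) * 9).val
    have heq : a + 2 * ((((y - a) * 9).val : ℕ) : ZMod 17) = y := by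
      rw [ZMod.natCast_val, ZMod.cast_id]
      rw [show (2 : ZMod 17) * ((y - a) * 9) = (y - a) * 18 by ring,
        show (18 : ZMod 17) = 1 by decide, mul_one]
      ring
    rwa [heq] at this
  rw [huniv] at hcard8
  simp at hcard8

theorem circulant_17_max_independent_set :
    IsGreatest {k : ℕ | ∃ s : Finset (ZMod 17),
      (∀ v ∈ s, ∀ w ∈ s, ¬ (circulantGraph 17).Adj v w) ∧ s.card = k} 7 := by
  constructor
  · exact ⟨{0,5,7,9,11,13,15}, by decide, by decide⟩
  · rintro k ⟨s, hs, rfl⟩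
    exact circ17_upper_bound s hs
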